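/- (Fagin is not instance-optimal: linear vs constant stopping depth) For every even M ≥ 4 there exists a dataset with R = 2, t_1, t_2 : Fin M → ℝ and query weights u = (1,1) such that: (a) the unique targets achieving the maximum score are the first and last items with score 1.1 while all others score 1.0; (b) the smallest depth at which some target appears in the top d positions of both sorted lists is M/2; but (c) at depth 2 the threshold upper bound t_1(L_1(2)) + t_2(L_2(2)) = 1.0 is already below the best score 1.1 seen at depth 1, so the threshold stopping depth is at most 2. -/

import Mathlib

/-- Fagin is not instance-optimal: for every even `M ≥ 4` there is a dataset with `R = 2`
and weights `(1,1)` where Fagin's stopping depth is `M / 2` (linear in `M`) while the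
threshold upper bound already drops below the best seen score at (0-based) depth 1. -/
theorem stmt_8 (M : ℕ) (hM : 4 ≤ M) (hMe : Even M) :
    ∃ (t₁ t₂ : Fin M → ℝ) (L₁ L₂ : Fin M ≃ Fin M),
      -- lists sorted decreasingly
      (∀ i j : Fin M, i ≤ j → t₁ (L₁ j) ≤ t₁ (L₁ i)) ∧
      (∀ i j : Fin M, i ≤ j → t₂ (L₂ j) ≤ t₂ (L₂ i)) ∧
      -- (a) scores: first and last items uniquely achieve the maximum 1.1, others score 1.0
      (t₁ ⟨0, by omega⟩ + t₂ ⟨0, by omega⟩ = 1.1) ∧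
      (t₁ ⟨M - 1, by omega⟩ + t₂ ⟨M - 1, by omega⟩ = 1.1) ∧
      (∀ i : Fin M, (i : ℕ) ≠ 0 → (i : ℕ) ≠ M - 1 → t₁ i + t₂ i = 1) ∧
      (∀ i : Fin M, t₁ i + t₂ i ≤ 1.1) ∧
      -- (b) smallest depth at which some target appears in the top positions of both lists
      IsLeast {d : ℕ | ∃ i : Fin M, ((L₁.symm i : ℕ) ≤ d ∧ (L₂.symm i : ℕ) ≤ d)} (M / 2) ∧
      -- (c) at depth 1 the threshold upper bound equals 1.0, below the best score 1.1 seen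
      -- at depth 0, so the threshold stopping depth is at most 1 (0-based)
      (t₁ (L₁ ⟨1, by omega⟩) + t₂ (L₂ ⟨1, by omega⟩) = 1) ∧
      (t₁ (L₁ ⟨1, by omega⟩) + t₂ (L₂ ⟨1, by omega⟩) <
        t₁ (L₁ ⟨0, by omega⟩) + t₂ (L₁ ⟨0, by omega⟩)) := by
  refine ⟨fun i => if (i : ℕ) = 0 then 1.1 else if (i : ℕ) = M - 1 then 0 else 0.5,
    fun i => if (i : ℕ) = 0 then 0 else if (i : ℕ) = M - 1 then 1.1 else 0.5,
    Equiv.refl _, Fin.revPerm, ?_, ?_, ?_, ?_, ?_, ?_, ?_, ?_, ?_⟩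
  · intro i j hij
    have hij' : (i : ℕ) ≤ (j : ℕ) := hij
    have hi := i.isLt; have hj := j.isLt
    dsimp only [Equiv.refl_apply]
    split_ifs <;> norm_num <;> omega
  · intro i j hij
    have hij' : (i : ℕ) ≤ (j : ℕ) := hij
    have hi := i.isLt; have hj := j.isLt
    simp only [Fin.revPerm_apply, Fin.val_rev]
    split_ifs <;> norm_num <;> omega
  · norm_num
  · have h1 : M - 1 ≠ 0 := by omega
    simp [h1]
  · intro i h0 h1
    simp only [h0, h1, if_neg, if_false]
    norm_num
  · intro i
    have hi := i.isLt
    dsimp only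
    split_ifs <;> norm_num <;> omega
  · constructor
    · refine Set.mem_setOf_eq ▸ ⟨⟨M / 2, by omega⟩, ?_, ?_⟩
      · show ((⟨M / 2, by omega⟩ : Fin M) : ℕ) ≤ M / 2
        simp
      · show ((Fin.revPerm.symm ⟨M / 2, by omega⟩ : Fin M) : ℕ) ≤ M / 2
        simp [Fin.val_rev]
        omega
    · rintro d ⟨i, h1, h2⟩
      simp only [Equiv.refl_symm, Equiv.refl_apply] at h1
      have h2' : ((Fin.revPerm.symm i : Fin M) : ℕ) = M - 1 - (i : ℕ) := by
        simp [Fin.val_rev]; omega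
      rw [h2'] at h2
      have hi := i.isLt
      omega
  · have h1 : (1 : ℕ) ≠ 0 := by omega
    have h2 : (1 : ℕ) ≠ M - 1 := by omega
    have h3 : ((Fin.rev ⟨1, by omega⟩ : Fin M) : ℕ) = M - 2 := by
      simp [Fin.val_rev]
    have h4 : M - 2 ≠ 0 := by omega
    have h5 : M - 2 ≠ M - 1 := by omega
    simp only [Equiv.refl_apply, Fin.revPerm_apply, h3]
    simp only [if_neg h1, if_neg h2, if_neg h4, if_neg h5]
    norm_num [h2]
  · have h1 : (1 : ℕ) ≠ 0 := by omega
    have h2 : (1 : ℕ) ≠ M - 1 := by omega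
    have h3 : ((Fin.rev ⟨1, by omega⟩ : Fin M) : ℕ) = M - 2 := by
      simp [Fin.val_rev]
    have h4 : M - 2 ≠ 0 := by omega
    have h5 : M - 2 ≠ M - 1 := by omega
    simp only [Equiv.refl_apply, Fin.revPerm_apply, h3]
    simp only [if_neg h1, if_neg h2, if_neg h4, if_neg h5]
    norm_num [h2]
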